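/- Assume additionally that 2 is invertible in R. Then for every integer n with 1 ≤ n ≤ 2^k, the R-linear map sending a polynomial F ∈ R[x] with deg F < n to the vector (F(ω_0), F(ω_1), …, F(ω_{n−1})) ∈ R^n is bijective. (This is the mathematical content of the invertibility of the truncated Fourier transform of length n.) -/

import Mathlib

/-- The length-`k` bit-reversal of `s`: if `s = Σ_{i<k} b_i 2^i` with `b_i ∈ {0,1}`,
then `rev k s = Σ_{i<k} b_i 2^(k-1-i)`. -/
def rev (k s : ℕ) : ℕ := ∑ i ∈ Finset.range k, (s / 2 ^ i % 2) * 2 ^ (k - 1 - i)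

lemma rev_succ (k s : ℕ) : rev (k + 1) s = 2 ^ k * (s % 2) + rev k (s / 2) := by
  unfold rev
  rw [Finset.sum_range_succ']
  simp only [pow_zero, Nat.div_one, Nat.add_sub_cancel]
  rw [add_comm, mul_comm]
  congr 1
  apply Finset.sum_congr rfl
  intro i hi
  rw [Finset.mem_range] at hi
  congr 2
  · rw [pow_succ, Nat.div_div_eq_div_mul, mul_comm]
  · omega

lemma rev_lt {k s : ℕ} : rev k s < 2 ^ k := by
  induction k generalizing s with
  | zero => simp [rev]
  | succ k ih =>
    rw [rev_succ]
    have h1 : s % 2 ≤ 1 := by omega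
    have := @ih (s / 2)
    calc 2 ^ k * (s % 2) + rev k (s / 2) ≤ 2 ^ k * 1 + rev k (s / 2) := by
          gcongr
      _ < 2 ^ (k + 1) := by rw [pow_succ]; omega

lemma rev_inj {k s t : ℕ} (hs : s < 2 ^ k) (ht : t < 2 ^ k) (h : rev k s = rev k t) :
    s = t := by
  induction k generalizing s t with
  | zero => omega
  | succ k ih =>
    rw [rev_succ, rev_succ] at h
    have h1 : rev k (s / 2) < 2 ^ k := rev_lt
    have h2 : rev k (t / 2) < 2 ^ k := rev_lt
    have hst : s % 2 = t % 2 ∧ rev k (s / 2) = rev k (t / 2) := by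
      rcases Nat.mod_two_eq_zero_or_one s with hs' | hs' <;>
        rcases Nat.mod_two_eq_zero_or_one t with ht' | ht' <;>
        rw [hs', ht'] at h <;> simp at h <;> omega
    have := ih (s := s / 2) (t := t / 2) (by omega) (by omega) hst.2
    omega

lemma unit_of_pow_two_eq_neg_one {R : Type*} [CommRing R] [Invertible (2 : R)]
    {ζ : R} {t : ℕ} (h : ζ ^ 2 ^ t = -1) : IsUnit (ζ - 1) := by
  have key : ∀ t : ℕ, ∀ ζ : R, ζ ^ 2 ^ t = -1 → ∃ c : R, (ζ - 1) * c = -2 := by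
    intro t
    induction t with
    | zero => intro ζ h; exact ⟨1, by simpa using by linear_combination h⟩
    | succ t ih =>
      intro ζ h
      have h2 : (ζ ^ 2) ^ 2 ^ t = -1 := by rw [← pow_mul, ← pow_succ']; exact h
      obtain ⟨c, hc⟩ := ih _ h2
      exact ⟨(ζ + 1) * c, by linear_combination hc⟩
  obtain ⟨c, hc⟩ := key t ζ h
  have h2 : IsUnit (-2 : R) := (isUnit_of_invertible (2 : R)).neg
  exact isUnit_of_mul_isUnit_left (hc ▸ h2)

lemma unit_pow_sub_one {R : Type*} [CommRing R] [Invertible (2 : R)] {k : ℕ}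
    (ω : R) (hω : ω ^ 2 ^ (k - 1) = -1) (hk : 1 ≤ k) {j : ℕ} (hj0 : 0 < j)
    (hjk : j < 2 ^ k) : IsUnit (ω ^ j - 1) := by
  set e := j.factorization 2 with he
  have hord : 2 ^ e ∣ j := Nat.ordProj_dvd j 2
  obtain ⟨m, hm⟩ := hord
  have hmodd : ¬ (2 ∣ m) := by
    intro hdvd
    have : 2 ^ (e + 1) ∣ j := by obtain ⟨m', rfl⟩ := hdvd; exact ⟨m', by rw [hm]; ring⟩
    exact Nat.pow_succ_factorization_not_dvd hj0.ne' Nat.prime_two this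
  have hek : e < k := by
    have : 2 ^ e ≤ j := Nat.le_of_dvd hj0 ⟨m, hm⟩
    have := lt_of_le_of_lt this hjk
    exact (Nat.pow_lt_pow_iff_right (by norm_num)).mp this
  have key : (ω ^ j) ^ 2 ^ (k - 1 - e) = -1 := by
    rw [← pow_mul, hm]
    have hee : e + (k - 1 - e) = k - 1 := by omega
    have : 2 ^ e * m * 2 ^ (k - 1 - e) = 2 ^ (k - 1) * m := by
      calc 2 ^ e * m * 2 ^ (k - 1 - e) = 2 ^ e * 2 ^ (k - 1 - e) * m := by ring
        _ = 2 ^ (k - 1) * m := by rw [← pow_add, hee]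
    rw [this, pow_mul, hω]
    have : Odd m := Nat.odd_iff.mpr (by omega)
    exact this.neg_one_pow
  exact unit_of_pow_two_eq_neg_one key

lemma unit_pow_sub_pow {R : Type*} [CommRing R] [Invertible (2 : R)] {k : ℕ}
    (ω : R) (hω : ω ^ 2 ^ (k - 1) = -1) (hk : 1 ≤ k) {a b : ℕ} (hab : b < a)
    (ha : a < 2 ^ k) : IsUnit (ω ^ a - ω ^ b) := by
  have hωu : IsUnit ω := by
    apply IsUnit.of_mul_eq_one (a := ω) (ω ^ (2 ^ k - 1))
    have : ω * ω ^ (2 ^ k - 1) = ω ^ 2 ^ k := by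
      rw [← pow_succ']
      congr 1
      have : 0 < 2 ^ k := Nat.pow_pos (n := k) (by norm_num)
      omega
    rw [this]
    have : 2 ^ k = 2 ^ (k - 1) * 2 := by rw [← pow_succ]; congr 1; omega
    rw [this, pow_mul, hω]; ring
  have : ω ^ a - ω ^ b = ω ^ b * (ω ^ (a - b) - 1) := by
    rw [mul_sub, mul_one, ← pow_add]
    congr 2
    omega
  rw [this]
  exact (hωu.pow b).mul (unit_pow_sub_one ω hω hk (by omega) (by omega))

theorem stmt11 {R : Type*} [CommRing R] [Invertible (2 : R)] (k : ℕ) (hk : 1 ≤ k) (ω : R)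
    (hω : ω ^ 2 ^ (k - 1) = -1) (n : ℕ) (hn1 : 1 ≤ n) (hn2 : n ≤ 2 ^ k) :
    Function.Bijective
      (fun F : Polynomial.degreeLT R n =>
        fun i : Fin n => Polynomial.eval (ω ^ rev k (i : ℕ)) (F : Polynomial R)) := by
  set x : Fin n → R := fun i => ω ^ rev k (i : ℕ) with hx
  set V : Matrix (Fin n) (Fin n) R := Matrix.vandermonde x with hV
  have hdet : IsUnit V.det := by
    rw [hV, Matrix.det_vandermonde]
    apply Finset.prod_induction _ IsUnit (fun a b => IsUnit.mul) isUnit_one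
    intro i _
    apply Finset.prod_induction _ IsUnit (fun a b => IsUnit.mul) isUnit_one
    intro j hj
    rw [Finset.mem_Ioi] at hj
    have hij : rev k (i : ℕ) ≠ rev k (j : ℕ) := fun h =>
      absurd (rev_inj (lt_of_lt_of_le i.2 hn2) (lt_of_lt_of_le j.2 hn2) h) (by omega)
    rcases lt_or_gt_of_ne hij with h | h
    · exact unit_pow_sub_pow ω hω hk h rev_lt
    · have := (unit_pow_sub_pow ω hω hk h rev_lt).neg
      simpa using this
  have hmv : Function.Bijective V.mulVec := by
    rw [Function.bijective_iff_has_inverse]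
    refine ⟨V⁻¹.mulVec, fun v => ?_, fun v => ?_⟩
    · rw [Matrix.mulVec_mulVec, Matrix.nonsing_inv_mul V hdet, Matrix.one_mulVec]
    · rw [Matrix.mulVec_mulVec, Matrix.mul_nonsing_inv V hdet, Matrix.one_mulVec]
  have heq : (fun F : Polynomial.degreeLT R n =>
        fun i : Fin n => Polynomial.eval (ω ^ rev k (i : ℕ)) (F : Polynomial R))
      = V.mulVec ∘ (Polynomial.degreeLTEquiv R n) := by
    funext F
    funext i
    simp only [Function.comp_apply, Matrix.mulVec, dotProduct, hV,
      Matrix.vandermonde]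
    rw [show (F : Polynomial R).eval (ω ^ rev k (i : ℕ))
        = (F : Polynomial R).eval (x i) from rfl]
    rw [Polynomial.eval_eq_sum_degreeLTEquiv F.2]
    apply Finset.sum_congr rfl
    intro j _
    rw [mul_comm]
    rfl
  rw [heq]
  exact hmv.comp (Polynomial.degreeLTEquiv R n).bijective
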